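/- A relational structure 𝔸 is isomorphic to the n-th power B^n of some relational structure 𝔹 (of the same signature) if and only if 𝔸 has polymorphisms f (n-ary) and g (unary) satisfying: f(x,...,x)=x; f(f(x_{1,1},...,x_{1,n}),...,f(x_{n,1},...,x_{n,n})) = f(x_{1,1},...,x_{n,n}); g^n(x)=x; and g(f(x_1,...,x_n)) = f(g(x_2),...,g(x_n),g(x_1)). -/

import Mathlib

set_option linter.unusedSectionVars false
set_option linter.unusedTactic false

section Aux

variable {A : Type} {n : ℕ} [NeZero n]

open Fin.NatCast Fin.CommRing

private lemma iter_mod (g : A → A) (h3 : ∀ x, g^[n] x = x) (a : ℕ) (x : A) :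
    g^[a % n] x = g^[a] x := by
  conv_rhs => rw [← Nat.mod_add_div a n, Function.iterate_add_apply]
  congr 1
  have hid : g^[n] = id := funext h3
  rw [Function.iterate_mul, hid, Function.iterate_id, id_eq]

private lemma iter_fin (g : A → A) (h3 : ∀ x, g^[n] x = x) (k m : Fin n) (x : A) :
    g^[k.val] (g^[m.val] x) = g^[(k + m).val] x := by
  rw [← Function.iterate_add_apply, Fin.val_add, iter_mod g h3]

private lemma shift_nat (f : (Fin n → A) → A) (g : A → A)
    (h4 : ∀ x : Fin n → A, g (f x) = f (fun k => g (x (k + 1)))) :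
    ∀ (m : ℕ) (x : Fin n → A), g^[m] (f x) = f (fun k => g^[m] (x (k + (m : Fin n)))) := by
  intro m
  induction m with
  | zero => intro x; simp
  | succ m ih =>
    intro x
    rw [Function.iterate_succ_apply', ih, h4]
    congr 1
    funext k
    rw [Function.iterate_succ_apply']
    congr 3
    push_cast
    ring

private lemma shift_fin (f : (Fin n → A) → A) (g : A → A)
    (h4 : ∀ x : Fin n → A, g (f x) = f (fun k => g (x (k + 1))))
    (a : Fin n) (x : Fin n → A) :
    g^[a.val] (f x) = f (fun k => g^[a.val] (x (k + a))) := by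
  have := shift_nat f g h4 a.val x
  rwa [Fin.cast_val_eq_self] at this

private def pmap (f : (Fin n → A) → A) (g : A → A) (x : A) : A :=
  f (fun k => g^[(-k : Fin n).val] x)

private lemma p_gfix (f : (Fin n → A) → A) (g : A → A)
    (h3 : ∀ x, g^[n] x = x)
    (h4 : ∀ x : Fin n → A, g (f x) = f (fun k => g (x (k + 1))))
    (a : Fin n) (x : A) : g^[a.val] (pmap f g x) = pmap f g x := by
  unfold pmap
  rw [shift_fin f g h4]
  congr 1
  funext k
  rw [iter_fin g h3]
  congr 2
  ring

private lemma p_diag (f : (Fin n → A) → A) (g : A → A)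
    (h1 : ∀ x : A, f (fun _ => x) = x)
    (h2 : ∀ x : Fin n → Fin n → A, f (fun i => f (x i)) = f (fun i => x i i))
    (h3 : ∀ x, g^[n] x = x)
    (x : A) : f (fun k => pmap f g (g^[k.val] x)) = x := by
  have step : ∀ k : Fin n, pmap f g (g^[k.val] x) = f (fun m => g^[(k - m).val] x) := by
    intro k
    unfold pmap
    congr 1
    funext m
    rw [iter_fin g h3]
    congr 2
    ring
  calc f (fun k => pmap f g (g^[k.val] x))
      = f (fun k => f (fun m => g^[(k - m).val] x)) := by
        congr 1; funext k; exact step k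
    _ = f (fun k => g^[(k - k : Fin n).val] x) := h2 _
    _ = x := by
        have : ∀ k : Fin n, (k - k : Fin n) = 0 := fun k => sub_self k
        simp only [this, Fin.val_zero, Function.iterate_zero, id_eq]
        exact h1 x

private lemma p_fcomp (f : (Fin n → A) → A) (g : A → A)
    (h2 : ∀ x : Fin n → Fin n → A, f (fun i => f (x i)) = f (fun i => x i i))
    (h3 : ∀ x, g^[n] x = x)
    (h4 : ∀ x : Fin n → A, g (f x) = f (fun k => g (x (k + 1))))
    (k : Fin n) (c : Fin n → A) :
    pmap f g (g^[k.val] (f c)) = pmap f g (g^[k.val] (c k)) := by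
  rw [shift_fin f g h4 k c]
  unfold pmap
  have lhs : (fun m : Fin n => g^[(-m : Fin n).val] (f (fun l => g^[k.val] (c (l + k)))))
      = (fun m : Fin n => f (fun l => g^[(k - m).val] (c (l + -m + k)))) := by
    funext m
    rw [shift_fin f g h4 (-m)]
    congr 1
    funext l
    rw [iter_fin g h3]
    congr 2
    ring
  rw [lhs, h2]
  congr 1
  funext m
  rw [iter_fin g h3]
  congr 2
  · ring
  · show (m + -m + k : Fin n) = k
    ring

private lemma p_idem (f : (Fin n → A) → A) (g : A → A)
    (h2 : ∀ x : Fin n → Fin n → A, f (fun i => f (x i)) = f (fun i => x i i))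
    (h3 : ∀ x, g^[n] x = x)
    (h4 : ∀ x : Fin n → A, g (f x) = f (fun k => g (x (k + 1))))
    (x : A) : pmap f g (pmap f g x) = pmap f g x := by
  have h0 : pmap f g x = g^[(0 : Fin n).val] (f (fun k => g^[(-k : Fin n).val] x)) := by
    simp [pmap]
  conv_lhs => rw [h0]
  rw [p_fcomp f g h2 h3 h4 0 (fun k => g^[(-k : Fin n).val] x)]
  simp

private lemma p_fix (f : (Fin n → A) → A) (g : A → A)
    (h3 : ∀ x, g^[n] x = x)
    (h4 : ∀ x : Fin n → A, g (f x) = f (fun k => g (x (k + 1))))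
    (a : Fin n) (y : A) (hy : pmap f g y = y) : pmap f g (g^[a.val] y) = y := by
  have h' : g^[a.val] y = y := by
    nth_rewrite 1 [← hy]
    rw [p_gfix f g h3 h4, hy]
  rw [h', hy]

end Aux
theorem power_decomposition_iff
    (A : Type) (ι : Type) (J : ι → Type) (R : ∀ s : ι, Set (J s → A))
    (n : ℕ) [NeZero n] :
    (∃ (B : Type) (RB : ∀ s : ι, Set (J s → B)) (e : A ≃ (Fin n → B)),
      ∀ (s : ι) (t : J s → A), t ∈ R s ↔ ∀ k : Fin n, (fun j => e (t j) k) ∈ RB s) ↔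
    (∃ (f : (Fin n → A) → A) (g : A → A),
      (∀ (s : ι) (t : Fin n → J s → A),
        (∀ k, t k ∈ R s) → (fun j => f (fun k => t k j)) ∈ R s) ∧
      (∀ (s : ι) (t : J s → A), t ∈ R s → (fun j => g (t j)) ∈ R s) ∧
      (∀ x : A, f (fun _ => x) = x) ∧
      (∀ x : Fin n → Fin n → A, f (fun i => f (x i)) = f (fun i => x i i)) ∧
      (∀ x : A, g^[n] x = x) ∧
      (∀ x : Fin n → A, g (f x) = f (fun k => g (x (k + 1))))) := by
  constructor
  · rintro ⟨B, RB, e, hR⟩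
    refine ⟨fun x => e.symm (fun k => e (x k) k), fun x => e.symm (fun k => e x (k + 1)),
      ?_, ?_, ?_, ?_, ?_, ?_⟩
    · intro s t ht
      rw [hR]
      intro k
      simp only [Equiv.apply_symm_apply]
      exact (hR s (t k)).mp (ht k) k
    · intro s t ht
      rw [hR]
      intro k
      simp only [Equiv.apply_symm_apply]
      exact (hR s t).mp ht (k + 1)
    · intro x
      exact e.symm_apply_apply x
    · intro x
      simp only [Equiv.apply_symm_apply]
    · -- g^[n] = id
      open Fin.NatCast Fin.CommRing in
      have key : ∀ (m : ℕ) (x : A) (k : Fin n),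
          e ((fun x => e.symm (fun k => e x (k + 1)))^[m] x) k = e x (k + (m : Fin n)) := by
        intro m
        induction m with
        | zero => intro x k; simp
        | succ m ih =>
          intro x k
          rw [Function.iterate_succ_apply]
          rw [ih]
          simp only [Equiv.apply_symm_apply]
          congr 1
          push_cast
          ring
      intro x
      apply e.injective
      funext k
      rw [key n x k]
      simp
    · intro x
      simp only [Equiv.apply_symm_apply]
  · rintro ⟨f, g, hf, hg, h1, h2, h3, h4⟩
    have hgiter : ∀ (m : ℕ) (s : ι) (t : J s → A), t ∈ R s → (fun j => g^[m] (t j)) ∈ R s := by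
      intro m
      induction m with
      | zero => intro s t ht; simpa using ht
      | succ m ih =>
        intro s t ht
        simp only [Function.iterate_succ_apply']
        exact hg s _ (ih s t ht)
    have hpp : ∀ (s : ι) (t : J s → A), t ∈ R s → (fun j => pmap f g (t j)) ∈ R s := by
      intro s t ht
      have := hf s (fun m j => g^[(-m : Fin n).val] (t j)) (fun m => hgiter _ s t ht)
      simpa [pmap] using this
    refine ⟨{a : A // pmap f g a = a}, fun s => {u | (fun j => (u j).val) ∈ R s},
      { toFun := fun x k => ⟨pmap f g (g^[k.val] x), p_idem f g h2 h3 h4 _⟩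
        invFun := fun b => f (fun k => (b k).val)
        left_inv := fun x => p_diag f g h1 h2 h3 x
        right_inv := fun b => by
          funext k
          apply Subtype.ext
          show pmap f g (g^[k.val] (f fun m => (b m).val)) = (b k).val
          rw [p_fcomp f g h2 h3 h4]
          exact p_fix f g h3 h4 k _ (b k).2 }, ?_⟩
    intro s t
    constructor
    · intro ht k
      simp only [Equiv.coe_fn_mk, Set.mem_setOf_eq]
      exact hpp s _ (hgiter k.val s t ht)
    · intro h
      have hmem : ∀ k : Fin n, (fun j => pmap f g (g^[k.val] (t j))) ∈ R s := by
        intro k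
        have := h k
        simpa only [Equiv.coe_fn_mk, Set.mem_setOf_eq] using this
      have := hf s (fun k j => pmap f g (g^[k.val] (t j))) hmem
      have e2 : (fun j => f (fun k => pmap f g (g^[k.val] (t j)))) = t :=
        funext fun j => p_diag f g h1 h2 h3 (t j)
      rwa [e2] at this
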